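/- Let P, Q ∈ k[X] over an algebraically closed field k of characteristic zero, and let α be a root of P' of multiplicity p and β a root of Q' of multiplicity q. Suppose f, g are nonconstant elements of a function field K over k with P(f) = Q(g), and let p₀ ∈ C be a point with v_{p₀}(f − α) > 0 and v_{p₀}(g − β) > 0. Then (p+1)·v_{p₀}(f − α) = (q+1)·v_{p₀}(g − β). -/

import Mathlib

open scoped BigOperators

/-- Abstract data of the function field `K` of a smooth projective curve `C`
over an algebraically closed field `k`: the set of closed points, normalized
valuations `v p`, the genus, and the order `dv p f = v_p (d f / d t_p)` of the
local derivative with respect to a uniformizer at `p`. -/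
structure CurveFunctionField (k : Type) [Field k] where
  K : Type
  [fieldK : Field K]
  [algK : Algebra k K]
  Point : Type
  v : Point → K → ℤ
  genus : ℕ
  dv : Point → K → ℤ
  v_zero : ∀ p, v p 0 = 0
  v_mul : ∀ p (f g : K), f ≠ 0 → g ≠ 0 → v p (f * g) = v p f + v p g
  v_add : ∀ p (f g : K), f ≠ 0 → g ≠ 0 → f + g ≠ 0 →
    min (v p f) (v p g) ≤ v p (f + g)
  v_const : ∀ p (c : k), c ≠ 0 → v p (algebraMap k K c) = 0
  v_finite : ∀ f : K, f ≠ 0 → (Function.support fun p => v p f).Finite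
  v_normalized : ∀ p : Point, ∃ f : K, f ≠ 0 ∧ v p f = 1
  dv_pole : ∀ p (f : K), v p f < 0 → dv p f = v p f - 1
  dv_reg : ∀ p (f : K), 0 ≤ v p f → 0 ≤ dv p f

namespace CurveFunctionField

variable {k : Type} [Field k] (F : CurveFunctionField k)

instance : Field F.K := F.fieldK
instance : Algebra k F.K := F.algK

/-- `f ∈ K` is nonconstant if it is not in the image of `k`. -/
def Nonconstant (f : F.K) : Prop := f ∉ Set.range (algebraMap k F.K)

/-- The height `h(f) = Σ_p −min{0, v_p(f)}` of `f ∈ K`. -/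
noncomputable def ht (f : F.K) : ℤ := ∑ᶠ p : F.Point, -(min 0 (F.v p f))

/-- The height `h(f, g) = Σ_p −min{v_p(f), v_p(g)}` of `[f : g] ∈ ℙ¹(K)`. -/
noncomputable def ht2 (f g : F.K) : ℤ :=
  ∑ᶠ p : F.Point, -(min (F.v p f) (F.v p g))

end CurveFunctionField

open Polynomial CurveFunctionField

namespace CurveFunctionField

variable {k : Type} [Field k] (F : CurveFunctionField k)

lemma v_one (p : F.Point) : F.v p 1 = 0 := by
  have := F.v_mul p 1 1 one_ne_zero one_ne_zero
  simp at this; omega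

lemma v_neg (p : F.Point) {x : F.K} (hx : x ≠ 0) : F.v p (-x) = F.v p x := by
  have h1 : F.v p ((-1 : F.K) * -1) = F.v p (-1) + F.v p (-1) :=
    F.v_mul p (-1) (-1) (by simp) (by simp)
  simp only [neg_mul, one_mul, neg_neg] at h1
  rw [F.v_one] at h1
  have hm : F.v p (-x) = F.v p (-1) + F.v p x := by
    have := F.v_mul p (-1) x (by simp) hx
    simpa using this
  omega

lemma v_add_eq (p : F.Point) {a b : F.K} (ha : a ≠ 0) (hb : b ≠ 0) (hab : a + b ≠ 0)
    (h : F.v p a < F.v p b) : F.v p (a + b) = F.v p a := by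
  have h1 := F.v_add p a b ha hb hab
  have h2 : min (F.v p (a + b)) (F.v p (-b)) ≤ F.v p a := by
    have := F.v_add p (a + b) (-b) hab (neg_ne_zero.2 hb) (by simpa using ha)
    simpa using this
  rw [F.v_neg p hb] at h2
  omega

lemma v_pow (p : F.Point) {x : F.K} (hx : x ≠ 0) (n : ℕ) :
    F.v p (x ^ n) = n * F.v p x := by
  induction n with
  | zero => simpa using F.v_one p
  | succ n ih =>
    rw [pow_succ, F.v_mul p _ _ (pow_ne_zero _ hx) hx, ih]
    push_cast; ring

lemma v_prod (p : F.Point) (s : Multiset F.K)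
    (h : ∀ x ∈ s, x ≠ 0 ∧ F.v p x = 0) : s.prod ≠ 0 ∧ F.v p s.prod = 0 := by
  induction s using Multiset.induction with
  | empty => simpa using F.v_one p
  | cons a s ih =>
    have ha := h a (Multiset.mem_cons_self a s)
    have hs := ih fun x hx => h x (Multiset.mem_cons_of_mem hx)
    rw [Multiset.prod_cons]
    refine ⟨mul_ne_zero ha.1 hs.1, ?_⟩
    rw [F.v_mul p _ _ ha.1 hs.1, ha.2, hs.2]; ring

lemma aeval_ne_zero {f : F.K} (hf : F.Nonconstant f) {A : k[X]} (hA : A ≠ 0)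
    [IsAlgClosed k] : aeval f A ≠ 0 := by
  intro h0
  have hsplit : A.Splits := IsAlgClosed.splits A
  have hfac := hsplit.eq_prod_roots
  rw [hfac] at h0
  simp only [map_mul, map_multiset_prod, Multiset.map_map, Function.comp] at h0
  rcases mul_eq_zero.1 h0 with h | h
  · exact ((map_ne_zero_iff _ (algebraMap k F.K).injective).2
      (leadingCoeff_ne_zero.2 hA)) (by simpa using h)
  · rw [Multiset.prod_eq_zero_iff] at h
    simp only [Multiset.mem_map] at h
    obtain ⟨c, -, hc⟩ := h
    simp only [map_sub, aeval_X, aeval_C] at hc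
    exact hf ⟨c, (sub_eq_zero.1 hc).symm⟩

lemma v_aeval_eq_zero [IsAlgClosed k] (p : F.Point) {f : F.K} (hf : F.Nonconstant f)
    {α : k} (hfα : 0 < F.v p (f - algebraMap k F.K α))
    {R : k[X]} (hR : R.eval α ≠ 0) :
    aeval f R ≠ 0 ∧ F.v p (aeval f R) = 0 := by
  have hR0 : R ≠ 0 := fun h => hR (by simp [h])
  have hsplit : R.Splits := IsAlgClosed.splits R
  have hfac := hsplit.eq_prod_roots
  have key : ∀ x ∈ R.roots.map (fun c => f - algebraMap k F.K c),
      x ≠ 0 ∧ F.v p x = 0 := by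
    intro x hx
    simp only [Multiset.mem_map] at hx
    obtain ⟨c, hc, rfl⟩ := hx
    have hcα : c ≠ α := fun h => hR (h ▸ (isRoot_of_mem_roots hc))
    have hne : f - algebraMap k F.K c ≠ 0 := by
      intro h; exact hf ⟨c, (sub_eq_zero.1 h).symm⟩
    have ha : algebraMap k F.K (α - c) ≠ 0 := by
      exact (map_ne_zero_iff _ (algebraMap k F.K).injective).2
        (sub_ne_zero.2 (fun h => hcα h.symm))
    have hb : f - algebraMap k F.K α ≠ 0 := fun h => hfα.ne' (h ▸ F.v_zero p)
    have hsum : algebraMap k F.K (α - c) + (f - algebraMap k F.K α)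
        = f - algebraMap k F.K c := by
      rw [map_sub]; ring
    have hva : F.v p (algebraMap k F.K (α - c)) = 0 :=
      F.v_const p _ (sub_ne_zero.2 (fun h => hcα h.symm))
    refine ⟨hne, ?_⟩
    rw [← hsum, F.v_add_eq p ha hb (hsum ▸ hne) (by rw [hva]; exact hfα)]
    exact hva
  obtain ⟨hpne, hpv⟩ := F.v_prod p _ key
  constructor
  · rw [hfac]
    simp only [map_mul, map_multiset_prod, Multiset.map_map, Function.comp]
    refine mul_ne_zero ?_ (by simpa [map_sub] using hpne)
    simpa using ((map_ne_zero_iff _ (algebraMap k F.K).injective).2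
      (leadingCoeff_ne_zero.2 hR0))
  · conv_lhs => rw [hfac]
    simp only [map_mul, map_multiset_prod, Multiset.map_map, Function.comp]
    have hlc : algebraMap k F.K R.leadingCoeff ≠ 0 :=
      (map_ne_zero_iff _ (algebraMap k F.K).injective).2 (leadingCoeff_ne_zero.2 hR0)
    rw [aeval_C] at *
    rw [F.v_mul p _ _ hlc (by simpa [map_sub] using hpne),
      F.v_const p _ (leadingCoeff_ne_zero.2 hR0)]
    simpa [map_sub] using hpv

lemma key_decomp [IsAlgClosed k] [CharZero k] (p₀ : F.Point) (P : k[X])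
    (hP : 0 < P.natDegree) (α : k) (p : ℕ)
    (hp : P.derivative.rootMultiplicity α = p)
    {f : F.K} (hf : F.Nonconstant f)
    (hfα : 0 < F.v p₀ (f - algebraMap k F.K α)) :
    aeval f P - algebraMap k F.K (P.eval α) ≠ 0 ∧
    F.v p₀ (aeval f P - algebraMap k F.K (P.eval α)) =
      ((p : ℤ) + 1) * F.v p₀ (f - algebraMap k F.K α) := by
  set A : k[X] := P - C (P.eval α) with hAdef
  have hA0 : A ≠ 0 := by
    intro h
    have h2 : A.natDegree = P.natDegree := natDegree_sub_C
    rw [h] at h2; simp at h2; omega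
  have hroot : A.IsRoot α := by simp [hAdef, IsRoot]
  set m := A.rootMultiplicity α with hm
  have hdA : A.derivative = P.derivative := by simp [hAdef]
  have h1 : (A.derivative).rootMultiplicity α = m - 1 :=
    derivative_rootMultiplicity_of_root hroot
  have hmpos : 0 < m := (rootMultiplicity_pos hA0).2 hroot
  have hm1 : m = p + 1 := by rw [hdA, hp] at h1; omega
  have hfacA := A.pow_mul_divByMonic_rootMultiplicity_eq α
  set R := A /ₘ (X - C α) ^ m with hRdef
  have hRα : R.eval α ≠ 0 := eval_divByMonic_pow_rootMultiplicity_ne_zero α hA0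
  obtain ⟨hRne, hRv⟩ := F.v_aeval_eq_zero p₀ hf hfα hRα
  have haev : aeval f P - algebraMap k F.K (P.eval α)
      = (f - algebraMap k F.K α) ^ m * aeval f R := by
    have e1 : aeval f P - algebraMap k F.K (P.eval α) = aeval f A := by
      simp [hAdef, map_sub, aeval_C]
    rw [e1]
    conv_lhs => rw [← hfacA]
    simp [map_mul, map_pow, map_sub, aeval_X, aeval_C]
    exact Or.inl rfl
  have hbne : f - algebraMap k F.K α ≠ 0 := fun h => hfα.ne' (h ▸ F.v_zero p₀)
  rw [haev]
  refine ⟨mul_ne_zero (pow_ne_zero _ hbne) hRne, ?_⟩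
  rw [F.v_mul p₀ _ _ (pow_ne_zero _ hbne) hRne, F.v_pow p₀ hbne, hRv, hm1]
  push_cast; ring

end CurveFunctionField



/-- If `α` is a root of `P'` of multiplicity `p`, `β` a root of `Q'` of
multiplicity `q`, `P(f) = Q(g)`, and at the point `p₀` both `f − α` and
`g − β` vanish, then `(p+1)·v_{p₀}(f−α) = (q+1)·v_{p₀}(g−β)`. -/
theorem local_multiplicity_relation {k : Type} [Field k] [IsAlgClosed k] [CharZero k]
    (F : CurveFunctionField k) (P Q : Polynomial k)
    (hP : 0 < P.natDegree) (hQ : 0 < Q.natDegree)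
    (α β : k) (p q : ℕ)
    (hα : P.derivative.IsRoot α) (hβ : Q.derivative.IsRoot β)
    (hp : P.derivative.rootMultiplicity α = p)
    (hq : Q.derivative.rootMultiplicity β = q)
    (f g : F.K) (hf : F.Nonconstant f) (hg : F.Nonconstant g)
    (heq : Polynomial.aeval f P = Polynomial.aeval g Q)
    (p₀ : F.Point)
    (hfα : 0 < F.v p₀ (f - algebraMap k F.K α))
    (hgβ : 0 < F.v p₀ (g - algebraMap k F.K β)) :
    ((p : ℤ) + 1) * F.v p₀ (f - algebraMap k F.K α) =
      ((q : ℤ) + 1) * F.v p₀ (g - algebraMap k F.K β) := by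
  obtain ⟨hAne, hAv⟩ := F.key_decomp p₀ P hP α p hp hf hfα
  obtain ⟨hBne, hBv⟩ := F.key_decomp p₀ Q hQ β q hq hg hgβ
  set A := aeval f P - algebraMap k F.K (P.eval α) with hAdef
  set B := aeval g Q - algebraMap k F.K (Q.eval β) with hBdef
  have hPQ : P.eval α = Q.eval β := by
    by_contra hne
    have hc : algebraMap k F.K (P.eval α - Q.eval β) ≠ 0 :=
      (map_ne_zero_iff _ (algebraMap k F.K).injective).2 (sub_ne_zero.2 hne)
    have hvc : F.v p₀ (algebraMap k F.K (P.eval α - Q.eval β)) = 0 :=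
      F.v_const p₀ _ (sub_ne_zero.2 hne)
    have hsum : B + (-A) = algebraMap k F.K (P.eval α - Q.eval β) := by
      simp only [hAdef, hBdef, map_sub, ← heq]; ring
    have hAvpos : 0 < F.v p₀ A := by
      rw [hAv]; exact mul_pos (by positivity) hfα
    have hBvpos : 0 < F.v p₀ B := by
      rw [hBv]; exact mul_pos (by positivity) hgβ
    have hmin := F.v_add p₀ B (-A) hBne (neg_ne_zero.2 hAne) (hsum ▸ hc)
    rw [hsum, hvc, F.v_neg p₀ hAne] at hmin
    omega
  have hAB : A = B := by
    rw [hAdef, hBdef, heq, hPQ]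
  rw [← hAv, hAB, hBv]
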